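/- For γ₁, γ₂ ∈ ℝ with γ₂ ≠ 0, γ₃ ∈ ℝ^d, define LayerNorm(v; γ) = γ₁ (v − avg(v)) / (‖v − avg(v)‖ + |γ₂|) + γ₃, where avg(v) = ((1/d) Σ_j v_j) · 1. Then for all a, b ∈ ℝ^d with avg(a) = avg(b) = 0, ‖LayerNorm(a; γ) − LayerNorm(b; γ)‖ ≤ 2 (|γ₁|/|γ₂|) ‖a − b‖. -/

import Mathlib

noncomputable section

/-- The constant vector whose entries all equal the mean of `v`. -/
def avg {d : ℕ} (v : EuclideanSpace ℝ (Fin d)) : EuclideanSpace ℝ (Fin d) :=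
  WithLp.toLp 2 (fun _ => (∑ j, v j) / d)

/-- LayerNorm(v; γ) = γ₁ (v − avg v) / (‖v − avg v‖ + |γ₂|) + γ₃. -/
def layerNorm {d : ℕ} (γ₁ γ₂ : ℝ) (γ₃ : EuclideanSpace ℝ (Fin d))
    (v : EuclideanSpace ℝ (Fin d)) : EuclideanSpace ℝ (Fin d) :=
  (γ₁ / (‖v - avg v‖ + |γ₂|)) • (v - avg v) + γ₃

/-- LayerNorm is Lipschitz with constant `2|γ₁|/|γ₂|` on centered vectors. -/
theorem layerNorm_lipschitz_centered {d : ℕ}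
    (γ₁ γ₂ : ℝ) (hγ₂ : γ₂ ≠ 0) (γ₃ : EuclideanSpace ℝ (Fin d))
    (a b : EuclideanSpace ℝ (Fin d))
    (ha : avg a = 0) (hb : avg b = 0) :
    ‖layerNorm γ₁ γ₂ γ₃ a - layerNorm γ₁ γ₂ γ₃ b‖
      ≤ 2 * (|γ₁| / |γ₂|) * ‖a - b‖ := by
  have hc : (0:ℝ) < |γ₂| := abs_pos.mpr hγ₂
  set c := |γ₂| with hcdef
  have ha' : a - avg a = a := by rw [ha, sub_zero]
  have hb' : b - avg b = b := by rw [hb, sub_zero]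
  have hα : (0:ℝ) < ‖a‖ + c := by positivity
  have hβ : (0:ℝ) < ‖b‖ + c := by positivity
  set α := ‖a‖ + c with hαdef
  set β := ‖b‖ + c with hβdef
  have key : layerNorm γ₁ γ₂ γ₃ a - layerNorm γ₁ γ₂ γ₃ b
      = γ₁ • ((1/α) • (a - b) + ((1/α) - (1/β)) • b) := by
    simp only [layerNorm, ha', hb', ← hcdef, ← hαdef, ← hβdef]
    have h1 : γ₁ / α = γ₁ * (1/α) := by ring
    have h2 : γ₁ / β = γ₁ * (1/β) := by ring
    rw [h1, h2]
    module
  rw [key, norm_smul, Real.norm_eq_abs]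
  have h1 : ‖(1/α) • (a - b)‖ ≤ ‖a - b‖ / c := by
    rw [norm_smul, Real.norm_eq_abs, abs_of_pos (by positivity : (0:ℝ) < 1/α),
      one_div, inv_mul_eq_div]
    gcongr
    rw [hαdef]; linarith [norm_nonneg a]
  have h2 : ‖((1/α) - (1/β)) • b‖ ≤ ‖a - b‖ / c := by
    rw [norm_smul, Real.norm_eq_abs]
    have hd : (1/α) - (1/β) = (β - α) / (α * β) := by
      field_simp
    rw [hd, abs_div, abs_of_pos (by positivity : (0:ℝ) < α * β)]
    have hba : |β - α| ≤ ‖a - b‖ := by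
      have : β - α = ‖b‖ - ‖a‖ := by rw [hαdef, hβdef]; ring
      rw [this]
      calc |‖b‖ - ‖a‖| ≤ ‖b - a‖ := abs_norm_sub_norm_le b a
        _ = ‖a - b‖ := norm_sub_rev b a
    calc |β - α| / (α * β) * ‖b‖ ≤ ‖a - b‖ / (α * β) * ‖b‖ :=
          mul_le_mul_of_nonneg_right ((div_le_div_iff_of_pos_right (by positivity)).mpr hba)
            (norm_nonneg b)
      _ = ‖a - b‖ / α * (‖b‖ / β) := by rw [div_mul_eq_mul_div, div_mul_div_comm]
      _ ≤ ‖a - b‖ / c * 1 := by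
          gcongr
          · rw [hαdef]; linarith [norm_nonneg a]
          · rw [div_le_one hβ, hβdef]; linarith
      _ = ‖a - b‖ / c := mul_one _
  calc |γ₁| * ‖(1/α) • (a - b) + ((1/α) - (1/β)) • b‖
      ≤ |γ₁| * (‖a - b‖ / c + ‖a - b‖ / c) :=
        mul_le_mul_of_nonneg_left ((norm_add_le _ _).trans (add_le_add h1 h2)) (abs_nonneg _)
    _ = 2 * (|γ₁| / c) * ‖a - b‖ := by ring
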